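/- In the above setting, suppose ‖x‖ = 1, ‖(I − P)x‖ ≤ √a with a = γ/(4Γ) and hence λ(x) ≤ K := 2λ̲. Then ⟨C x, x⟩ ≥ γ/K. (I.e., C is uniformly coercive on any sufficiently small angular neighborhood of the eigendirection u among unit vectors.) -/

import Mathlib

open scoped RealInnerProductSpace

/-- If `‖x‖ = 1` and `‖(I - P)x‖ ≤ √a` with `a = γ/(4Γ)` (so that
`λ(x) ≤ K := 2λ̲`), then `⟨C x, x⟩ ≥ γ/K`. -/
theorem stmt8 {H : Type*} [NormedAddCommGroup H] [InnerProductSpace ℝ H] [CompleteSpace H]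
    (A C : H →L[ℝ] H)
    (hAsymm : ∀ y z, ⟪A y, z⟫ = ⟪y, A z⟫) (hCsymm : ∀ y z, ⟪C y, z⟫ = ⟪y, C z⟫)
    (hCpos : ∀ y, y ≠ 0 → 0 < ⟪C y, y⟫)
    (γ Γ : ℝ) (hγ : 0 < γ)
    (hA : ∀ y, γ * ‖y‖ ^ 2 ≤ ⟪A y, y⟫ ∧ ⟪A y, y⟫ ≤ Γ * ‖y‖ ^ 2)
    (lam : ℝ) (hlam : 0 < lam) (u : H) (hu : u ≠ 0) (heig : A u = lam • C u)
    (hmin : ∀ y, y ≠ 0 → lam ≤ ⟪A y, y⟫ / ⟪C y, y⟫)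
    (x : H) (hx : ‖x‖ = 1)
    (hδ : ‖x - (⟪x, u⟫ / ⟪u, u⟫) • u‖ ≤ Real.sqrt (γ / (4 * Γ))) :
    γ / (2 * lam) ≤ ⟪C x, x⟫ := by
  set t : ℝ := ⟪x, u⟫ / ⟪u, u⟫ with ht
  set w : H := x - t • u with hw
  -- Γ is positive
  have hΓ : 0 < Γ := by
    have h1 := (hA x).1
    have h2 := (hA x).2
    rw [hx] at h1 h2
    nlinarith
  -- squared norm bound on w
  have hwnn : (0:ℝ) ≤ γ / (4 * Γ) := by positivity
  have hw2 : ‖w‖ ^ 2 ≤ γ / (4 * Γ) := by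
    have := pow_le_pow_left₀ (norm_nonneg w) hδ 2
    rwa [Real.sq_sqrt hwnn] at this
  -- key identity
  have hxw : x = w + t • u := by rw [hw]; abel
  have hAu : ∀ z : H, ⟪A u, z⟫ = lam * ⟪C u, z⟫ := by
    intro z; rw [heig, inner_smul_left]; simp
  have hAwu : ⟪A w, u⟫ = lam * ⟪C u, w⟫ := by
    rw [hAsymm w u, real_inner_comm, hAu w]
  have key : ⟪A x, x⟫ = lam * ⟪C x, x⟫ + (⟪A w, w⟫ - lam * ⟪C w, w⟫) := by
    have hCwu : ⟪C w, u⟫ = ⟪C u, w⟫ := by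
      rw [hCsymm w u, real_inner_comm]
    rw [hxw]
    simp only [map_add, map_smul, inner_add_left, inner_add_right, inner_smul_left,
      inner_smul_right, RCLike.star_def, conj_trivial, hAu, hAwu, hCwu]
    ring
  -- bounds
  have hAw : ⟪A w, w⟫ ≤ Γ * ‖w‖ ^ 2 := (hA w).2
  have hCw : 0 ≤ ⟪C w, w⟫ := by
    rcases eq_or_ne w 0 with h | h
    · simp [h]
    · exact le_of_lt (hCpos w h)
  have hAx : γ ≤ ⟪A x, x⟫ := by
    have := (hA x).1; rw [hx] at this; simpa using this
  have hΓw : Γ * ‖w‖ ^ 2 ≤ γ / 4 := by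
    have := mul_le_mul_of_nonneg_left hw2 (le_of_lt hΓ)
    calc Γ * ‖w‖ ^ 2 ≤ Γ * (γ / (4 * Γ)) := this
      _ = γ / 4 := by field_simp
  have hmain : γ ≤ lam * ⟪C x, x⟫ + γ / 4 := by
    calc γ ≤ ⟪A x, x⟫ := hAx
      _ = lam * ⟪C x, x⟫ + (⟪A w, w⟫ - lam * ⟪C w, w⟫) := key
      _ ≤ lam * ⟪C x, x⟫ + γ / 4 := by nlinarith
  rw [div_le_iff₀ (by positivity)]
  nlinarith
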